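/- Let p ≡ 1 (mod 4) be prime and suppose p = x₁² + y₁² with x₁ odd, y₁ even, and x, y positive integers with p^n = x² + y², p ∤ x, p ∤ y for some n ≥ 1. Then p cannot divide both x₁·x + y₁·y and x₁·x − y₁·y; consequently at least one of |x₁x + y₁y|, |x₁x − y₁y| is a positive integer not divisible by p, and p^{n+1} = (x₁x + y₁y)² + (x·y₁ − x₁·y)² = (x₁x − y₁y)² + (x·y₁ + x₁·y)². -/

import Mathlib

theorem stmt17 (p : ℕ) (hp : p.Prime) (h1 : p % 4 = 1) (x₁ y₁ : ℤ)
    (hdec : (p : ℤ) = x₁ ^ 2 + y₁ ^ 2) (hx₁ : Odd x₁) (hy₁ : Even y₁)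
    (x y : ℤ) (hx : 0 < x) (hy : 0 < y) (n : ℕ) (hn : 1 ≤ n)
    (hs : (p : ℤ) ^ n = x ^ 2 + y ^ 2) (hpx : ¬ (p : ℤ) ∣ x) (hpy : ¬ (p : ℤ) ∣ y) :
    ¬ ((p : ℤ) ∣ x₁ * x + y₁ * y ∧ (p : ℤ) ∣ x₁ * x - y₁ * y) ∧
    ((0 < |x₁ * x + y₁ * y| ∧ ¬ (p : ℤ) ∣ |x₁ * x + y₁ * y|) ∨
     (0 < |x₁ * x - y₁ * y| ∧ ¬ (p : ℤ) ∣ |x₁ * x - y₁ * y|)) ∧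
    (p : ℤ) ^ (n + 1) = (x₁ * x + y₁ * y) ^ 2 + (x * y₁ - x₁ * y) ^ 2 ∧
    (p : ℤ) ^ (n + 1) = (x₁ * x - y₁ * y) ^ 2 + (x * y₁ + x₁ * y) ^ 2 := by
  have hpZ : Prime (p : ℤ) := Nat.prime_iff_prime_int.mp hp
  have hp2 : ¬ (p : ℤ) ∣ 2 := by
    intro h
    have h' : p ∣ 2 := by exact_mod_cast h
    have := (Nat.prime_dvd_prime_iff_eq hp Nat.prime_two).mp h'
    omega
  have hpx₁ : ¬ (p : ℤ) ∣ x₁ := by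
    intro h
    have hy1 : (p : ℤ) ∣ y₁ := by
      have hd : (p : ℤ) ∣ x₁ ^ 2 + y₁ ^ 2 := hdec ▸ dvd_refl _
      have hx2 : (p : ℤ) ∣ x₁ ^ 2 := h.pow two_ne_zero
      exact hpZ.dvd_of_dvd_pow ((dvd_add_right hx2).mp hd)
    obtain ⟨a, ha⟩ := h
    obtain ⟨b, hb⟩ := hy1
    have hpp : (p : ℤ) ^ 2 ∣ (p : ℤ) := by
      exact ⟨a ^ 2 + b ^ 2, by nth_rewrite 1 [hdec]; rw [ha, hb]; ring⟩
    have h1' : (1 : ℤ) < (p : ℤ) := by exact_mod_cast hp.one_lt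
    have := Int.le_of_dvd (by positivity) hpp
    nlinarith
  have hmain : ¬ ((p : ℤ) ∣ x₁ * x + y₁ * y ∧ (p : ℤ) ∣ x₁ * x - y₁ * y) := by
    rintro ⟨ha, hb⟩
    have h2x : (p : ℤ) ∣ 2 * (x₁ * x) := by
      have := dvd_add ha hb; rwa [show x₁ * x + y₁ * y + (x₁ * x - y₁ * y) = 2 * (x₁ * x) by ring] at this
    have : (p : ℤ) ∣ x₁ * x := (hpZ.dvd_or_dvd h2x).resolve_left hp2
    rcases hpZ.dvd_or_dvd this with h | h
    · exact hpx₁ h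
    · exact hpx h
  refine ⟨hmain, ?_, ?_, ?_⟩
  · by_cases hA : (p : ℤ) ∣ x₁ * x + y₁ * y
    · right
      have hB : ¬ (p : ℤ) ∣ x₁ * x - y₁ * y := fun hB => hmain ⟨hA, hB⟩
      have hne : x₁ * x - y₁ * y ≠ 0 := by rintro h; exact hB (h ▸ dvd_zero _)
      exact ⟨abs_pos.mpr hne, fun h => hB ((dvd_abs _ _).mp h)⟩
    · left
      have hne : x₁ * x + y₁ * y ≠ 0 := by rintro h; exact hA (h ▸ dvd_zero _)
      exact ⟨abs_pos.mpr hne, fun h => hA ((dvd_abs _ _).mp h)⟩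
  · rw [pow_succ, hs, hdec]; ring
  · rw [pow_succ, hs, hdec]; ring
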